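/- Let (Q, μ) be a measure space and let F, M : Q → (0,∞) be measurable functions with F, M ∈ L¹(μ). Then for every R > 1 and every measurable set B ⊆ Q, ∫_B M dμ ≤ R ∫_B F dμ + (1/ln R) ∫_Q (M − F)(ln M − ln F) dμ, where the last integral is well-defined in [0,∞] since the integrand (M − F)(ln M − ln F) is pointwise nonnegative. -/

import Mathlib

open MeasureTheory
open scoped ENNReal

/-- Uniform integrability bound: for positive integrable `F, M` and `R > 1`,
`∫_B M ≤ R ∫_B F + (1/ln R) ∫ (M - F)(ln M - ln F)`, the last (pointwise nonnegative)
integrand being integrated in the sense of the lower integral, with values in `[0,∞]`. -/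
theorem stmt_17 {Q : Type*} [MeasurableSpace Q] (μ : Measure Q)
    (F M : Q → ℝ) (hF : Measurable F) (hM : Measurable M)
    (hF0 : ∀ x, 0 < F x) (hM0 : ∀ x, 0 < M x)
    (hFint : Integrable F μ) (hMint : Integrable M μ)
    (R : ℝ) (hR : 1 < R) (B : Set Q) (hB : MeasurableSet B) :
    (∫⁻ x in B, ENNReal.ofReal (M x) ∂μ) ≤
      ENNReal.ofReal R * ∫⁻ x in B, ENNReal.ofReal (F x) ∂μ +
      ENNReal.ofReal (1 / Real.log R) *
        ∫⁻ x, ENNReal.ofReal ((M x - F x) * (Real.log (M x) - Real.log (F x))) ∂μ := by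
  have hlogR : 0 < Real.log R := Real.log_pos hR
  set c : ℝ := 1 / Real.log R with hc
  have hc0 : 0 ≤ c := by positivity
  have hR0 : 0 ≤ R := by linarith
  -- pointwise nonnegativity of the dissipation integrand
  have hg0 : ∀ x, 0 ≤ (M x - F x) * (Real.log (M x) - Real.log (F x)) := by
    intro x
    rcases le_total (F x) (M x) with h | h
    · exact mul_nonneg (by linarith) (by
        have := Real.log_le_log (hF0 x) h; linarith)
    · have := Real.log_le_log (hM0 x) h
      exact mul_nonneg_iff.2 (Or.inr ⟨by linarith, by linarith⟩)
  -- pointwise key inequality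
  have key : ∀ x, M x ≤ R * F x + c * ((M x - F x) * (Real.log (M x) - Real.log (F x))) := by
    intro x
    rcases le_or_gt (M x) (R * F x) with h | h
    · have := mul_nonneg hc0 (hg0 x); linarith
    · have hFx := hF0 x
      have hMx := hM0 x
      have hRF : F x ≤ R * F x := by nlinarith
      have hMF : 0 < M x - F x := by linarith
      have h1 : Real.log R ≤ Real.log (M x) - Real.log (F x) := by
        have hlog := Real.log_le_log (by positivity : (0:ℝ) < R * F x) h.le
        rw [Real.log_mul (by linarith) (ne_of_gt hFx)] at hlog
        linarith
      have h2 : (M x - F x) * Real.log R ≤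
          (M x - F x) * (Real.log (M x) - Real.log (F x)) :=
        mul_le_mul_of_nonneg_left h1 hMF.le
      have h3 : c * ((M x - F x) * Real.log R) = M x - F x := by
        rw [hc]; field_simp [hlogR.ne']
      have h4 := mul_le_mul_of_nonneg_left h2 hc0
      rw [h3] at h4
      linarith
    -- main calculation
  calc ∫⁻ x in B, ENNReal.ofReal (M x) ∂μ
      ≤ ∫⁻ x in B, (ENNReal.ofReal R * ENNReal.ofReal (F x) +
          ENNReal.ofReal c *
            ENNReal.ofReal ((M x - F x) * (Real.log (M x) - Real.log (F x)))) ∂μ := by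
        refine lintegral_mono fun x => ?_
        rw [← ENNReal.ofReal_mul hR0, ← ENNReal.ofReal_mul hc0,
          ← ENNReal.ofReal_add (mul_nonneg hR0 (hF0 x).le) (mul_nonneg hc0 (hg0 x))]
        exact ENNReal.ofReal_le_ofReal (key x)
    _ = ENNReal.ofReal R * ∫⁻ x in B, ENNReal.ofReal (F x) ∂μ +
          ENNReal.ofReal c * ∫⁻ x in B,
            ENNReal.ofReal ((M x - F x) * (Real.log (M x) - Real.log (F x))) ∂μ := by
        rw [lintegral_add_left (by fun_prop), lintegral_const_mul' _ _ (by simp),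
          lintegral_const_mul' _ _ (by simp)]
    _ ≤ ENNReal.ofReal R * ∫⁻ x in B, ENNReal.ofReal (F x) ∂μ +
          ENNReal.ofReal c * ∫⁻ x,
            ENNReal.ofReal ((M x - F x) * (Real.log (M x) - Real.log (F x))) ∂μ := by
        gcongr
        exact Measure.restrict_le_self
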